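/- Let R be a ring, G a finite group of order n with listing g_1, …, g_n, and u ∈ RG a unit with inverse u⁻¹, so that U = σ(u) and U⁻¹ = σ(u⁻¹) satisfy UU⁻¹ = U⁻¹U = I. For 1 ≤ r < n, write U = (A; B) where A consists of the first r rows of U, and write U⁻¹ = (C D) where D consists of the last n − r columns of U⁻¹. Then for every row vector ȳ ∈ R^n: there exists x̄ ∈ R^r with ȳ = x̄A if and only if ȳD = 0. -/

import Mathlib

/-- The `RG`-matrix of an element `w` of the group ring `RG`, relative to a
listing `g : Fin n ≃ G` of the elements of `G`. -/
noncomputable def rgMatrix {R : Type*} [Semiring R] {G : Type*} [Group G] {n : ℕ}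
    (g : Fin n ≃ G) (w : MonoidAlgebra R G) : Matrix (Fin n) (Fin n) R :=
  Matrix.of fun i j => w.coeff ((g i)⁻¹ * g j)

lemma rgMatrix_mul {R : Type*} [Semiring R] {G : Type*} [Group G] {n : ℕ}
    (g : Fin n ≃ G) (u v : MonoidAlgebra R G) :
    rgMatrix g (u * v) = rgMatrix g u * rgMatrix g v := by
  haveI : Fintype G := Fintype.ofEquiv _ g
  ext i j
  rw [Matrix.mul_apply]
  show (u * v).coeff ((g i)⁻¹ * g j) = _
  rw [MonoidAlgebra.mul_apply_left, Finsupp.sum_fintype _ _ (by simp)]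
  refine (Fintype.sum_equiv (g.trans (Equiv.mulLeft (g i)⁻¹)) _ _ fun k => ?_).symm
  simp [rgMatrix, mul_inv_rev, mul_assoc]

lemma rgMatrix_one {R : Type*} [Semiring R] {G : Type*} [Group G] {n : ℕ}
    (g : Fin n ≃ G) : rgMatrix (R := R) g 1 = 1 := by
  classical
  ext i j
  show (1 : MonoidAlgebra R G).coeff ((g i)⁻¹ * g j) = _
  rw [MonoidAlgebra.one_def, MonoidAlgebra.coeff_single, Finsupp.single_apply, Matrix.one_apply]
  have : (1 : G) = (g i)⁻¹ * g j ↔ i = j := by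
    rw [eq_comm, inv_mul_eq_one, ← g.apply_eq_iff_eq (x := i)]
  simp [this]

/-- let `u` be a unit of `RG` with inverse `uinv`, `U = σ(u)`,
`U⁻¹ = σ(uinv)`. For `1 ≤ r < n`, let `A` be the first `r` rows of `U` and `D` the
last `n - r` columns of `U⁻¹`. Then for every row vector `ȳ ∈ R^n`:
`ȳ = x̄ A` for some `x̄ ∈ R^r` iff `ȳ D = 0`. -/
theorem stmt13 {R : Type*} [Ring R] {G : Type*} [Group G] {n r : ℕ}
    (g : Fin n ≃ G) (u uinv : MonoidAlgebra R G)
    (h1 : u * uinv = 1) (h2 : uinv * u = 1)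
    (hr1 : 1 ≤ r) (hrn : r < n)
    (A : Matrix (Fin r) (Fin n) R)
    (hA : ∀ (k : Fin r) (j : Fin n), A k j = rgMatrix g u (Fin.castLE hrn.le k) j)
    (D : Matrix (Fin n) (Fin (n - r)) R)
    (hD : ∀ (a : Fin n) (j : Fin (n - r)),
      D a j = rgMatrix g uinv a ⟨r + (j : ℕ), by have := j.isLt; omega⟩)
    (y : Fin n → R) :
    (∃ x : Fin r → R, y = Matrix.vecMul x A) ↔ Matrix.vecMul y D = 0 := by
  set U := rgMatrix g u with hU
  set V := rgMatrix g uinv with hV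
  have hUV : U * V = 1 := by rw [hU, hV, ← rgMatrix_mul, h1, rgMatrix_one]
  have hVU : V * U = 1 := by rw [hU, hV, ← rgMatrix_mul, h2, rgMatrix_one]
  constructor
  · rintro ⟨x, rfl⟩
    rw [Matrix.vecMul_vecMul]
    have hAD : A * D = 0 := by
      ext k j
      have : (A * D) k j = (U * V) (Fin.castLE hrn.le k) ⟨r + (j : ℕ), by have := j.isLt; omega⟩ := by
        rw [Matrix.mul_apply, Matrix.mul_apply]
        exact Finset.sum_congr rfl fun a _ => by rw [hA, hD]
      rw [Matrix.zero_apply, this, hUV, Matrix.one_apply_ne]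
      intro h
      have := congrArg Fin.val h
      simp [Fin.castLE] at this
      omega
    rw [hAD, Matrix.vecMul_zero]
  · intro hyD
    set z := Matrix.vecMul y V with hz
    have hzero : ∀ a : Fin n, r ≤ (a : ℕ) → z a = 0 := by
      intro a ha
      have hj : (a : ℕ) - r < n - r := by have := a.isLt; omega
      have : z a = Matrix.vecMul y D ⟨(a : ℕ) - r, hj⟩ := by
        rw [hz, Matrix.vecMul, Matrix.vecMul, dotProduct, dotProduct]
        refine Finset.sum_congr rfl fun b _ => ?_
        rw [hD]
        have ha' : (⟨r + ((⟨(a : ℕ) - r, hj⟩ : Fin (n - r)) : ℕ), by omega⟩ : Fin n) = a :=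
          Fin.ext (by simp; omega)
        rw [ha']
      rw [this, hyD]
      rfl
    refine ⟨fun k => z (Fin.castLE hrn.le k), ?_⟩
    have hy : y = Matrix.vecMul z U := by
      rw [hz, Matrix.vecMul_vecMul, hVU, Matrix.vecMul_one]
    ext i
    rw [hy]
    rw [Matrix.vecMul, dotProduct, Matrix.vecMul, dotProduct]
    simp only [hA]
    have key : ∑ k : Fin r, z (Fin.castLE hrn.le k) * U (Fin.castLE hrn.le k) i
        = ∑ a ∈ Finset.univ.map (Fin.castLEEmb hrn.le), z a * U a i := by
      rw [Finset.sum_map]; rfl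
    rw [key]
    symm
    apply Finset.sum_subset (Finset.subset_univ _)
    intro a _ ha
    have : r ≤ (a : ℕ) := by
      by_contra h
      push_neg at h
      exact ha (Finset.mem_map.2 ⟨⟨(a : ℕ), h⟩, Finset.mem_univ _, by ext; simp⟩)
    rw [hzero a this, zero_mul]
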